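/- Let H = (−1,−2/ℚ) be the quaternion algebra over ℚ with i² = −1, j² = −2, k = ij = −ji, with orthogonal involution ♯(w + xi + yj + tk) = w + xi + yj − tk, and let O be the ℤ-span of 1, i, (1 + i + j)/2, (1 + i + k)/2. Then O is norm ♯-Euclidean: for all a, b ∈ O with b ≠ 0 and a·♯(b) ∈ O⁺, there exists q ∈ O⁺ with nrm(a − b·q) < nrm(b). -/

import Mathlib

/-- The reduced norm `nrm(z) = z·z̄` of a rational quaternion, as a rational number. -/
def qnrm {α β : ℚ} (q : QuaternionAlgebra ℚ α 0 β) : ℚ := (q * star q).re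

/-- The orthogonal involution `♯` on a quaternion algebra negating the `k`-component. -/
def kSharp {R : Type*} [CommRing R] {c₁ c₂ : R} (q : QuaternionAlgebra R c₁ 0 c₂) :
    QuaternionAlgebra R c₁ 0 c₂ := ⟨q.re, q.imI, q.imJ, -q.imK⟩

/-- The `ℤ`-span of `1, i, (1 + i + j)/2, (1 + i + k)/2` in `(−1,−2/ℚ)`. -/
def Ord12 : Submodule ℤ (QuaternionAlgebra ℚ (-1) 0 (-2)) :=
  Submodule.span ℤ
    {(1 : QuaternionAlgebra ℚ (-1) 0 (-2)), ⟨0, 1, 0, 0⟩, ⟨1/2, 1/2, 1/2, 0⟩,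
      ⟨1/2, 1/2, 0, 1/2⟩}

lemma qnrm_eq (q : QuaternionAlgebra ℚ (-1) 0 (-2)) :
    qnrm q = q.re^2 + q.imI^2 + 2*q.imJ^2 + 2*q.imK^2 := by
  simp only [qnrm, QuaternionAlgebra.re_mul, QuaternionAlgebra.re_star,
    QuaternionAlgebra.imI_star, QuaternionAlgebra.imJ_star, QuaternionAlgebra.imK_star]
  ring

lemma qnrm_mul (p q : QuaternionAlgebra ℚ (-1) 0 (-2)) :
    qnrm (p * q) = qnrm p * qnrm q := by
  simp only [qnrm_eq, QuaternionAlgebra.re_mul, QuaternionAlgebra.imI_mul,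
    QuaternionAlgebra.imJ_mul, QuaternionAlgebra.imK_mul]
  ring

lemma qnrm_star (q : QuaternionAlgebra ℚ (-1) 0 (-2)) :
    qnrm (star q) = qnrm q := by
  simp only [qnrm_eq, QuaternionAlgebra.re_star, QuaternionAlgebra.imI_star,
    QuaternionAlgebra.imJ_star, QuaternionAlgebra.imK_star]
  ring

set_option maxHeartbeats 1000000 in
/-- The covering bound for the lattice `ℤ⟨1, i, (1+i+j)/2⟩` in `ℚ⟨1,i,j⟩` with the form
`X² + Y² + 2Z²`: the covering radius squared is at most `5/8 < 1`. -/
lemma round_bound (n X Y Z : ℚ) (hn : 0 < n) :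
    ∃ u v c : ℤ, (X - n * (u + c/2))^2 + (Y - n * (v + c/2))^2
      + 2 * (Z - n * (c/2))^2 < n^2 := by
  have hn' : n ≠ 0 := hn.ne'
  obtain ⟨c, hc⟩ : ∃ c : ℤ, |2 * Z / n - c| ≤ 1/2 := ⟨round (2 * Z / n), abs_sub_round _⟩
  obtain ⟨u, hu⟩ : ∃ u : ℤ, |X / n - c/2 - u| ≤ 1/2 := ⟨round (X / n - c/2), abs_sub_round _⟩
  obtain ⟨v, hv⟩ : ∃ v : ℤ, |Y / n - c/2 - v| ≤ 1/2 := ⟨round (Y / n - c/2), abs_sub_round _⟩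
  have hb1 := abs_le.mp hu
  have hb2 := abs_le.mp hv
  have hb3 := abs_le.mp hc
  refine ⟨u, v, c, ?_⟩
  have e1 : X - n * (u + c/2) = n * (X / n - (c : ℚ)/2 - u) := by field_simp; ring
  have e2 : Y - n * (v + c/2) = n * (Y / n - (c : ℚ)/2 - v) := by field_simp; ring
  have e3 : Z - n * ((c : ℚ)/2) = n / 2 * (2 * Z / n - (c : ℚ)) := by field_simp
  have hn2 : 0 < n^2 := by positivity
  have q1 : (X / n - (c : ℚ)/2 - u)^2 ≤ 1/4 := by nlinarith [hb1.1, hb1.2]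
  have q2 : (Y / n - (c : ℚ)/2 - v)^2 ≤ 1/4 := by nlinarith [hb2.1, hb2.2]
  have q3 : (2 * Z / n - (c : ℚ))^2 ≤ 1/4 := by nlinarith [hb3.1, hb3.2]
  have E1 : (X - n * (u + c/2))^2 ≤ n^2 / 4 := by
    rw [e1, mul_pow]
    calc n^2 * (X / n - (c : ℚ)/2 - u)^2 ≤ n^2 * (1/4) :=
        mul_le_mul_of_nonneg_left q1 (le_of_lt hn2)
      _ = n^2 / 4 := by ring
  have E2 : (Y - n * (v + c/2))^2 ≤ n^2 / 4 := by
    rw [e2, mul_pow]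
    calc n^2 * (Y / n - (c : ℚ)/2 - v)^2 ≤ n^2 * (1/4) :=
        mul_le_mul_of_nonneg_left q2 (le_of_lt hn2)
      _ = n^2 / 4 := by ring
  have E3 : (Z - n * ((c : ℚ)/2))^2 ≤ n^2 / 16 := by
    rw [e3, mul_pow]
    calc (n/2)^2 * (2 * Z / n - (c : ℚ))^2 ≤ (n/2)^2 * (1/4) :=
        mul_le_mul_of_nonneg_left q3 (by positivity)
      _ ≤ n^2 / 16 := by nlinarith [hn2]
  linarith [E1, E2, E3, hn2]


set_option maxHeartbeats 1000000 in
/-- the order spanned by `1, i, (1+i+j)/2, (1+i+k)/2` in `(−1,−2/ℚ)` with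
the involution `♯` negating the `k`-component is norm `♯`-Euclidean. -/
theorem ord12_norm_sharp_euclidean :
    ∀ a b : QuaternionAlgebra ℚ (-1) 0 (-2), a ∈ Ord12 → b ∈ Ord12 →
      b ≠ 0 → a * kSharp b ∈ Ord12 → kSharp (a * kSharp b) = a * kSharp b →
      ∃ q ∈ Ord12, kSharp q = q ∧ qnrm (a - b * q) < qnrm b := by
  intro a b _ _ hbne _ hsym
  have hnn : 0 ≤ qnrm b := by rw [qnrm_eq]; positivity
  have hn0 : 0 < qnrm b := by
    rcases hnn.lt_or_eq with h | h
    · exact h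
    · exfalso; apply hbne
      rw [qnrm_eq] at h
      have h1 : b.re = 0 := by
        nlinarith [sq_nonneg b.re, sq_nonneg b.imI, sq_nonneg b.imJ, sq_nonneg b.imK]
      have h2 : b.imI = 0 := by
        nlinarith [sq_nonneg b.re, sq_nonneg b.imI, sq_nonneg b.imJ, sq_nonneg b.imK]
      have h3 : b.imJ = 0 := by
        nlinarith [sq_nonneg b.re, sq_nonneg b.imI, sq_nonneg b.imJ, sq_nonneg b.imK]
      have h4 : b.imK = 0 := by
        nlinarith [sq_nonneg b.re, sq_nonneg b.imI, sq_nonneg b.imJ, sq_nonneg b.imK]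
      ext <;> simp [h1, h2, h3, h4]
  have hxK : (star b * a).imK = 0 := by
    have h1 : (a * kSharp b).imK = 0 := by
      have := congrArg QuaternionAlgebra.imK hsym
      simp only [kSharp] at this ⊢
      linarith
    have h2 : (star b * a).imK = (a * kSharp b).imK := by
      simp only [QuaternionAlgebra.imK_mul, QuaternionAlgebra.imK_star,
        QuaternionAlgebra.imI_star, QuaternionAlgebra.imJ_star,
        QuaternionAlgebra.re_star, kSharp]
      ring
    rw [h2, h1]
  obtain ⟨u, v, c, hround⟩ := round_bound (qnrm b) (star b * a).re (star b * a).imI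
    (star b * a).imJ hn0
  refine ⟨⟨u + c/2, v + c/2, c/2, 0⟩, ?_, ?_, ?_⟩
  · have h1 : (1 : QuaternionAlgebra ℚ (-1) 0 (-2)) ∈ Ord12 :=
      Submodule.subset_span (by left; rfl)
    have h2 : (⟨0, 1, 0, 0⟩ : QuaternionAlgebra ℚ (-1) 0 (-2)) ∈ Ord12 :=
      Submodule.subset_span (by right; left; rfl)
    have h3 : (⟨1/2, 1/2, 1/2, 0⟩ : QuaternionAlgebra ℚ (-1) 0 (-2)) ∈ Ord12 :=
      Submodule.subset_span (by right; right; left; rfl)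
    have heq : (⟨u + c/2, v + c/2, c/2, 0⟩ : QuaternionAlgebra ℚ (-1) 0 (-2)) =
        u • (1 : QuaternionAlgebra ℚ (-1) 0 (-2)) +
        v • (⟨0, 1, 0, 0⟩ : QuaternionAlgebra ℚ (-1) 0 (-2)) +
        c • (⟨1/2, 1/2, 1/2, 0⟩ : QuaternionAlgebra ℚ (-1) 0 (-2)) := by
      ext <;>
        simp [QuaternionAlgebra.re_smul, QuaternionAlgebra.imI_smul,
          QuaternionAlgebra.imJ_smul, QuaternionAlgebra.imK_smul, zsmul_eq_mul] <;>
        push_cast <;> ring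
    rw [heq]
    exact add_mem (add_mem (Submodule.smul_mem _ _ h1) (Submodule.smul_mem _ _ h2))
      (Submodule.smul_mem _ _ h3)
  · ext <;> simp [kSharp]
  · set Q : QuaternionAlgebra ℚ (-1) 0 (-2) := ⟨u + c/2, v + c/2, c/2, 0⟩ with hQ
    have hsb : star b * b = (qnrm b : ℚ) • (1 : QuaternionAlgebra ℚ (-1) 0 (-2)) := by
      ext <;>
        simp [qnrm_eq, QuaternionAlgebra.re_mul, QuaternionAlgebra.imI_mul,
          QuaternionAlgebra.imJ_mul, QuaternionAlgebra.imK_mul,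
          QuaternionAlgebra.re_star, QuaternionAlgebra.imI_star,
          QuaternionAlgebra.imJ_star, QuaternionAlgebra.imK_star, smul_eq_mul] <;>
        ring
    have hmm : star b * (a - b * Q) = star b * a - qnrm b • Q := by
      rw [mul_sub, ← mul_assoc, hsb, smul_mul_assoc, one_mul]
    have key : qnrm b * qnrm (a - b * Q) = qnrm (star b * a - qnrm b • Q) := by
      rw [← hmm, qnrm_mul, qnrm_star]
    have hexp : qnrm (star b * a - qnrm b • Q) =
        ((star b * a).re - qnrm b * (u + c/2))^2
        + ((star b * a).imI - qnrm b * (v + c/2))^2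
        + 2 * ((star b * a).imJ - qnrm b * (c/2))^2 := by
      rw [qnrm_eq]
      simp only [QuaternionAlgebra.re_sub, QuaternionAlgebra.imI_sub,
        QuaternionAlgebra.imJ_sub, QuaternionAlgebra.imK_sub,
        QuaternionAlgebra.re_smul, QuaternionAlgebra.imI_smul,
        QuaternionAlgebra.imJ_smul, QuaternionAlgebra.imK_smul, smul_eq_mul, hQ, hxK]
      ring
    have hsq : qnrm b ^ 2 = qnrm b * qnrm b := sq (qnrm b)
    have hlt : qnrm b * qnrm (a - b * Q) < qnrm b * qnrm b := by
      rw [key, hexp]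
      linarith [hround]
    exact lt_of_mul_lt_mul_left hlt hnn
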